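/- Let n be a positive integer not divisible by 3. Then D_{3n,n}^{(1)} is isomorphic to ℤ_3 × D_{n,n}^{(0)}. -/

import Mathlib

open Matrix Complex

noncomputable section

/-- The group `SU(3)`: 3×3 complex unitary matrices of determinant 1. -/
abbrev SU3 : Type := ↥(Matrix.specialUnitaryGroup (Fin 3) ℂ)

noncomputable instance : Group SU3 :=
  { (inferInstance : Monoid SU3) with
    inv := fun A => ⟨star A.val,
      ⟨Unitary.star_mem A.2.1, by
        have h2 : A.val.det = 1 := A.2.2
        show Matrix.detMonoidHom (star A.val) = 1
        show (star A.val).det = 1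
        rw [Matrix.star_eq_conjTranspose, Matrix.det_conjTranspose, h2, star_one]⟩⟩
    inv_mul_cancel := fun A => Subtype.ext A.2.1.1 }

/-- The matrix `E` with rows (0,1,0), (0,0,1), (1,0,0). -/
def EM : Matrix (Fin 3) (Fin 3) ℂ := !![0, 1, 0; 0, 0, 1; 1, 0, 0]

/-- The matrix `B` with rows (-1,0,0), (0,0,-1), (0,-1,0). -/
def BM : Matrix (Fin 3) (Fin 3) ℂ := !![-1, 0, 0; 0, 0, -1; 0, -1, 0]

/-- `ε = exp(2πi/m)`. -/
def eps (m : ℕ) : ℂ := Complex.exp (2 * Real.pi * Complex.I / m)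

/-- The diagonal matrix `F = diag(ε, ε^k, ε^(-k-1))` with `ε = exp(2πi/m)`. -/
def FM (m : ℕ) (k : ℤ) : Matrix (Fin 3) (Fin 3) ℂ :=
  Matrix.diagonal ![eps m, eps m ^ k, eps m ^ (-k - 1)]

/-- The diagonal matrix `G = diag(1, ε^(-r), ε^r)` with `ε = exp(2πi/m)`. -/
def GM (m r : ℕ) : Matrix (Fin 3) (Fin 3) ℂ :=
  Matrix.diagonal ![1, eps m ^ (-(r : ℤ)), eps m ^ (r : ℤ)]

-- SU3 coe lemmas
lemma SU3.cmul (A B : SU3) : (A * B).val = A.val * B.val := rfl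
lemma SU3.cone : (1 : SU3).val = 1 := rfl
lemma SU3.cinv (A : SU3) : (A⁻¹).val = star A.val := rfl
lemma SU3.cpow (A : SU3) (k : ℕ) : (A ^ k).val = A.val ^ k := by
  induction k with
  | zero => simp [SU3.cone]
  | succ k ih => rw [pow_succ, pow_succ, SU3.cmul, ih]

-- eps lemmas
lemma eps_ne_zero (m : ℕ) : eps m ≠ 0 := Complex.exp_ne_zero _
lemma eps_prim (m : ℕ) (h : m ≠ 0) : IsPrimitiveRoot (eps m) m :=
  Complex.isPrimitiveRoot_exp m h
lemma eps_pow_self (m : ℕ) (h : m ≠ 0) : eps m ^ m = 1 := (eps_prim m h).pow_eq_one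
lemma eps_mul_pow (a m : ℕ) (ha : a ≠ 0) (hm : m ≠ 0) : eps (a * m) ^ a = eps m := by
  unfold eps
  rw [← Complex.exp_nat_mul]
  congr 1
  have ha' : (a : ℂ) ≠ 0 := Nat.cast_ne_zero.mpr ha
  have hm' : (m : ℂ) ≠ 0 := Nat.cast_ne_zero.mpr hm
  push_cast
  field_simp

-- the monomial-with-2n-roots predicate
def QP (n : ℕ) (A : SU3) : Prop :=
  ∃ σ : Equiv.Perm (Fin 3), ∀ i j : Fin 3,
    (j = σ i → (A.val i j) ^ (2 * n) = 1) ∧ (j ≠ σ i → A.val i j = 0)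

lemma QP_one (n : ℕ) : QP n 1 :=
  ⟨1, fun i j => by
    constructor
    · intro h
      simp only [Equiv.Perm.one_apply] at h
      subst h
      simp [SU3.cone, Matrix.one_apply_eq]
    · intro h
      simp only [Equiv.Perm.one_apply] at h
      simp [SU3.cone, Matrix.one_apply_ne (Ne.symm h)]⟩

lemma QP_mul (n : ℕ) {A B : SU3} (hA : QP n A) (hB : QP n B) : QP n (A * B) := by
  obtain ⟨σ, hσ⟩ := hA
  obtain ⟨τ, hτ⟩ := hB
  refine ⟨σ.trans τ, fun i j => ?_⟩
  have hentry : (A * B).val i j = A.val i (σ i) * B.val (σ i) j := by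
    rw [SU3.cmul, Matrix.mul_apply]
    rw [Finset.sum_eq_single (σ i)]
    · intro k _ hk
      rw [(hσ i k).2 hk, zero_mul]
    · intro h; exact absurd (Finset.mem_univ _) h
  constructor
  · intro h
    rw [Equiv.trans_apply] at h
    rw [hentry, mul_pow, (hσ i (σ i)).1 rfl, (hτ (σ i) j).1 h, one_mul]
  · intro h
    rw [Equiv.trans_apply] at h
    rw [hentry, (hτ (σ i) j).2 h, mul_zero]

lemma QP_inv (n : ℕ) {A : SU3} (hA : QP n A) : QP n A⁻¹ := by
  obtain ⟨σ, hσ⟩ := hA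
  refine ⟨σ⁻¹, fun i j => ?_⟩
  have hentry : (A⁻¹).val i j = star (A.val j i) := by
    rw [SU3.cinv, Matrix.star_eq_conjTranspose, Matrix.conjTranspose_apply]
  constructor
  · intro h
    have hij : i = σ j := by rw [h]; simp
    rw [hentry, ← star_pow, (hσ j i).1 hij, star_one]
  · intro h
    have hij : i ≠ σ j := fun hc => h (by rw [hc]; simp)
    rw [hentry, (hσ j i).2 hij, star_zero]

def rot3 : Equiv.Perm (Fin 3) := ⟨![1, 2, 0], ![2, 0, 1], by decide, by decide⟩
def sw23 : Equiv.Perm (Fin 3) := ⟨![0, 2, 1], ![0, 2, 1], by decide, by decide⟩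

def dM (x : ℂ) (a b c : ℤ) : Matrix (Fin 3) (Fin 3) ℂ := Matrix.diagonal ![x^a, x^b, x^c]

lemma dM_mul (x : ℂ) (hx : x ≠ 0) (a b c a' b' c' : ℤ) :
    dM x a b c * dM x a' b' c' = dM x (a+a') (b+b') (c+c') := by
  unfold dM
  rw [Matrix.diagonal_mul_diagonal]
  exact congrArg Matrix.diagonal (by
    funext i; fin_cases i <;> simp [zpow_add₀ hx])

lemma dM_pow (x : ℂ) (a b c : ℤ) (k : ℕ) :
    dM x a b c ^ k = dM x (a*k) (b*k) (c*k) := by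
  unfold dM
  rw [Matrix.diagonal_pow]
  exact congrArg Matrix.diagonal (by
    funext i; fin_cases i <;> simp [← zpow_natCast, ← _root_.zpow_mul])

lemma dM_base (x : ℂ) (t a b c : ℤ) : dM (x^t) a b c = dM x (t*a) (t*b) (t*c) := by
  unfold dM
  exact congrArg Matrix.diagonal (by
    funext i; fin_cases i <;> simp [← _root_.zpow_mul])

lemma dM_one (x : ℂ) : dM x 0 0 0 = 1 := by
  unfold dM
  rw [show ![x^(0:ℤ), x^(0:ℤ), x^(0:ℤ)] = fun _ => (1:ℂ) from
    funext fun i => by fin_cases i <;> simp]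
  exact Matrix.diagonal_one

lemma dM_congr {x : ℂ} (hx : x ≠ 0) {m : ℕ} (hm : x ^ m = 1) {a b c a' b' c' : ℤ}
    (h1 : (m:ℤ) ∣ a' - a) (h2 : (m:ℤ) ∣ b' - b) (h3 : (m:ℤ) ∣ c' - c) :
    dM x a b c = dM x a' b' c' := by
  have key : ∀ u v : ℤ, (m:ℤ) ∣ v - u → x ^ u = x ^ v := by
    rintro u v ⟨k, hk⟩
    have hv : v = u + (m:ℤ) * k := by linarith
    rw [hv, zpow_add₀ hx, _root_.zpow_mul, zpow_natCast, hm, _root_.one_zpow, mul_one]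
  unfold dM
  rw [key a a' h1, key b b' h2, key c c' h3]

lemma dM_scalar (x : ℂ) (t : ℤ) : dM x t t t = (x^t) • (1 : Matrix (Fin 3) (Fin 3) ℂ) := by
  unfold dM
  rw [Matrix.smul_one_eq_diagonal]
  exact congrArg Matrix.diagonal (funext fun i => by fin_cases i <;> simp)

lemma FM_dM (m : ℕ) (k : ℤ) : FM m k = dM (eps m) 1 k (-k-1) := by
  unfold FM dM; rw [zpow_one]

lemma GM_dM (m r : ℕ) : GM m r = dM (eps m) 0 (-(r:ℤ)) r := by
  unfold GM dM; rw [zpow_zero]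
lemma QP_E (n : ℕ) (A : SU3) (hA : A.val = EM) : QP n A := by
  refine ⟨rot3, fun i j => ?_⟩
  rw [hA]
  fin_cases i <;> fin_cases j <;>
    exact ⟨fun h => by simp_all [EM, rot3, Matrix.vecHead, Matrix.vecTail], fun h => by simp_all [EM, rot3, Matrix.vecHead, Matrix.vecTail]⟩

lemma QP_B (n : ℕ) (A : SU3) (hA : A.val = BM) : QP n A := by
  refine ⟨sw23, fun i j => ?_⟩
  rw [hA]
  fin_cases i <;> fin_cases j <;>
    exact ⟨fun h => by simp_all [BM, sw23, pow_mul, Matrix.vecHead, Matrix.vecTail], fun h => by simp_all [BM, sw23, Matrix.vecHead, Matrix.vecTail]⟩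

lemma QP_diag (n : ℕ) (hn : n ≠ 0) (A : SU3) (v : Fin 3 → ℂ)
    (hA : A.val = Matrix.diagonal v) (hv : ∀ i, (v i) ^ (2 * n) = 1) : QP n A := by
  refine ⟨1, fun i j => ?_⟩
  rw [hA]
  constructor
  · intro h
    simp only [Equiv.Perm.one_apply] at h
    subst h
    rw [Matrix.diagonal_apply_eq]
    exact hv j
  · intro h
    simp only [Equiv.Perm.one_apply] at h
    exact Matrix.diagonal_apply_ne _ (Ne.symm h)

theorem statement18 (n : ℕ) (hn : 0 < n) (h3 : ¬ 3 ∣ n)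
    (E B F₁ G₁ F₀ G₀ : SU3)
    (hE : (E : Matrix (Fin 3) (Fin 3) ℂ) = EM)
    (hB : (B : Matrix (Fin 3) (Fin 3) ℂ) = BM)
    (hF₁ : (F₁ : Matrix (Fin 3) (Fin 3) ℂ) = FM (3 * n) 1)
    (hG₁ : (G₁ : Matrix (Fin 3) (Fin 3) ℂ) = GM (3 * n) 3)
    (hF₀ : (F₀ : Matrix (Fin 3) (Fin 3) ℂ) = FM n 0)
    (hG₀ : (G₀ : Matrix (Fin 3) (Fin 3) ℂ) = GM n 1) :
    Nonempty ((Subgroup.closure ({E, B, F₁, G₁} : Set SU3)) ≃*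
      Multiplicative (ZMod 3) × (Subgroup.closure ({E, B, F₀, G₀} : Set SU3))) := by
  classical
  have hn0 : n ≠ 0 := hn.ne'
  have h3n0 : 3 * n ≠ 0 := by omega
  have hE' : E.val = EM := hE
  have hB' : B.val = BM := hB
  have hF₁' : F₁.val = FM (3 * n) 1 := hF₁
  have hG₁' : G₁.val = GM (3 * n) 3 := hG₁
  have hF₀' : F₀.val = FM n 0 := hF₀
  have hG₀' : G₀.val = GM n 1 := hG₀
  have hεne : eps (3 * n) ≠ 0 := eps_ne_zero _
  have hε1 : eps (3 * n) ^ (3 * n) = 1 := eps_pow_self _ h3n0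
  have hη : eps n = eps (3 * n) ^ (3 : ℤ) := by
    rw [show (3 : ℤ) = ((3 : ℕ) : ℤ) from rfl, zpow_natCast]
    exact (eps_mul_pow 3 n (by norm_num) hn0).symm
  have hω : eps 3 = eps (3 * n) ^ (n : ℤ) := by
    rw [zpow_natCast, mul_comm 3 n]
    exact (eps_mul_pow n 3 hn0 (by norm_num)).symm
  -- values of generators
  have vF₁ : F₁.val = dM (eps (3*n)) 1 1 (-2) := by
    rw [hF₁', FM_dM]; norm_num
  have vG₁ : G₁.val = dM (eps (3*n)) 0 (-3) 3 := by
    rw [hG₁', GM_dM]; norm_num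
  have vF₀ : F₀.val = dM (eps (3*n)) 3 0 (-3) := by
    rw [hF₀', FM_dM, hη, dM_base]; norm_num
  have vG₀ : G₀.val = dM (eps (3*n)) 0 (-3) 3 := by
    rw [hG₀', GM_dM, hη, dM_base]; norm_num
  have hGG : G₁ = G₀ := Subtype.ext (by rw [vG₁, vG₀])
  -- the central element W
  set W : SU3 := F₁ ^ n * G₁ ^ n with hWdef
  have vW : W.val = dM (eps (3*n)) n n n := by
    rw [hWdef, SU3.cmul, SU3.cpow, SU3.cpow, vF₁, vG₁, dM_pow, dM_pow,
      dM_mul _ hεne]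
    refine dM_congr hεne hε1 ?_ ?_ ?_
    · exact ⟨0, by push_cast; ring⟩
    · exact ⟨1, by push_cast; ring⟩
    · exact ⟨0, by push_cast; ring⟩
  have hW3 : W ^ 3 = 1 := by
    refine Subtype.ext ?_
    rw [SU3.cpow, vW, dM_pow, SU3.cone]
    exact (dM_congr hεne hε1 ⟨-1, by push_cast; ring⟩ ⟨-1, by push_cast; ring⟩
      ⟨-1, by push_cast; ring⟩).trans (dM_one _)
  have hF₀E : F₀ = F₁ ^ 3 * G₁ := by
    refine Subtype.ext ?_
    rw [vF₀, SU3.cmul, SU3.cpow, vF₁, vG₁, dM_pow, dM_mul _ hεne]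
    norm_num
  obtain ⟨j, c, hjc⟩ : ∃ j c : ℕ, 3 * c + 1 = n * j := by
    have h2 : n % 3 = 1 ∨ n % 3 = 2 := by omega
    rcases h2 with h | h
    · exact ⟨1, n / 3, by omega⟩
    · exact ⟨2, (2 * n) / 3, by omega⟩
  have hjcz : 3 * (c:ℤ) + 1 = (n:ℤ) * j := by exact_mod_cast hjc
  have hI4 : F₁ * F₀ ^ c = W ^ j * G₀ ^ c := by
    refine Subtype.ext ?_
    rw [SU3.cmul, SU3.cmul, SU3.cpow, SU3.cpow, SU3.cpow, vF₁, vF₀, vW, vG₀,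
      dM_pow, dM_pow, dM_pow, dM_mul _ hεne, dM_mul _ hεne]
    refine dM_congr hεne hε1 ?_ ?_ ?_
    · exact ⟨0, by push_cast; linarith⟩
    · exact ⟨0, by push_cast; linarith⟩
    · exact ⟨j, by push_cast; linarith⟩
  -- memberships
  set H₁ : Subgroup SU3 := Subgroup.closure ({E, B, F₁, G₁} : Set SU3) with hH₁
  set H₀ : Subgroup SU3 := Subgroup.closure ({E, B, F₀, G₀} : Set SU3) with hH₀
  have hEm₁ : E ∈ H₁ := Subgroup.subset_closure (Set.mem_insert _ _)
  have hBm₁ : B ∈ H₁ := Subgroup.subset_closure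
    (Set.mem_insert_of_mem _ (Set.mem_insert _ _))
  have hF₁m₁ : F₁ ∈ H₁ := Subgroup.subset_closure
    (Set.mem_insert_of_mem _ (Set.mem_insert_of_mem _ (Set.mem_insert _ _)))
  have hG₁m₁ : G₁ ∈ H₁ := Subgroup.subset_closure
    (Set.mem_insert_of_mem _ (Set.mem_insert_of_mem _ (Set.mem_insert_of_mem _ rfl)))
  have hEm₀ : E ∈ H₀ := Subgroup.subset_closure (Set.mem_insert _ _)
  have hBm₀ : B ∈ H₀ := Subgroup.subset_closure
    (Set.mem_insert_of_mem _ (Set.mem_insert _ _))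
  have hF₀m₀ : F₀ ∈ H₀ := Subgroup.subset_closure
    (Set.mem_insert_of_mem _ (Set.mem_insert_of_mem _ (Set.mem_insert _ _)))
  have hG₀m₀ : G₀ ∈ H₀ := Subgroup.subset_closure
    (Set.mem_insert_of_mem _ (Set.mem_insert_of_mem _ (Set.mem_insert_of_mem _ rfl)))
  have hWm₁ : W ∈ H₁ := mul_mem (pow_mem hF₁m₁ n) (pow_mem hG₁m₁ n)
  have hle : H₀ ≤ H₁ := by
    rw [hH₀]
    refine (Subgroup.closure_le _).mpr ?_
    intro x hx
    simp only [Set.mem_insert_iff, Set.mem_singleton_iff] at hx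
    rcases hx with rfl | rfl | rfl | rfl
    · exact hEm₁
    · exact hBm₁
    · rw [hF₀E]; exact mul_mem (pow_mem hF₁m₁ 3) hG₁m₁
    · rw [← hGG]; exact hG₁m₁
  -- every element of H₀ is monomial with entries 2n-th roots of unity
  have hpow2 : ∀ z : ℂ, z ^ n = 1 → z ^ (2 * n) = 1 := fun z hz => by
    rw [mul_comm, pow_mul, hz, one_pow]
  have hepsn : eps n ^ (2 * n) = 1 := hpow2 _ (eps_pow_self n hn0)
  have hQ : ∀ x ∈ H₀, QP n x := by
    intro x hx
    refine Subgroup.closure_induction ?_ (QP_one n)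
      (fun a b _ _ ha hb => QP_mul n ha hb) (fun a _ ha => QP_inv n ha) hx
    intro y hy
    simp only [Set.mem_insert_iff, Set.mem_singleton_iff] at hy
    rcases hy with rfl | rfl | rfl | rfl
    · exact QP_E n _ hE'
    · exact QP_B n _ hB'
    · refine QP_diag n hn0 _ _ hF₀' fun i => ?_
      fin_cases i
      · exact hepsn
      · simp
      · show (eps n ^ (-0-1 : ℤ)) ^ (2*n) = 1
        norm_num [inv_pow, hepsn]
    · refine QP_diag n hn0 _ _ hG₀' fun i => ?_
      fin_cases i
      · simp
      · show (eps n ^ (-(1:ℕ) : ℤ)) ^ (2*n) = 1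
        norm_num [inv_pow, hepsn]
      · show (eps n ^ ((1:ℕ) : ℤ)) ^ (2*n) = 1
        norm_num [hepsn]
  -- W is central
  have hWc : ∀ A : SU3, Commute W A := by
    intro A
    have h1 : W.val * A.val = A.val * W.val := by
      rw [vW, dM_scalar, smul_mul_assoc, mul_smul_comm, one_mul, mul_one]
    show W * A = A * W
    exact Subtype.ext h1
  -- the homomorphism from Multiplicative (ZMod 3)
  let f : Multiplicative (ZMod 3) →* SU3 :=
    { toFun := fun a => W ^ (Multiplicative.toAdd a).val,
      map_one' := by
        show W ^ (Multiplicative.toAdd (1 : Multiplicative (ZMod 3))).val = 1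
        simp
      map_mul' := by
        intro a b
        show W ^ ((Multiplicative.toAdd a + Multiplicative.toAdd b).val) = _
        rw [ZMod.val_add, ← pow_eq_pow_mod _ hW3, pow_add] }
  have hfapp : ∀ a, f a = W ^ (Multiplicative.toAdd a).val := fun _ => rfl
  let Ψ : Multiplicative (ZMod 3) × ↥H₀ →* SU3 :=
    f.noncommCoprod H₀.subtype (fun m h => by
      rw [hfapp]; exact (hWc h.val).pow_left _)
  have hΨapp : ∀ p : Multiplicative (ZMod 3) × ↥H₀, Ψ p = f p.1 * ↑p.2 :=
    fun p => rfl
  have hΨH₁ : ∀ p, Ψ p ∈ H₁ := by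
    intro p
    rw [hΨapp, hfapp]
    exact mul_mem (pow_mem hWm₁ _) (hle p.2.2)
  let Ψ' : Multiplicative (ZMod 3) × ↥H₀ →* ↥H₁ := Ψ.codRestrict H₁ hΨH₁
  -- surjectivity
  have hrange : ∀ x ∈ H₀, x ∈ Ψ.range := fun x hx =>
    ⟨(1, ⟨x, hx⟩), by rw [hΨapp, _root_.map_one, _root_.one_mul]⟩
  have hWrange : W ∈ Ψ.range := by
    refine ⟨(Multiplicative.ofAdd 1, 1), ?_⟩
    rw [hΨapp, hfapp, OneMemClass.coe_one, mul_one]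
    show W ^ ((1 : ZMod 3)).val = W
    rw [show ((1 : ZMod 3)).val = 1 from rfl, pow_one]
  have hH₁range : H₁ ≤ Ψ.range := by
    rw [hH₁]
    refine (Subgroup.closure_le _).mpr ?_
    intro x hx
    simp only [Set.mem_insert_iff, Set.mem_singleton_iff] at hx
    rcases hx with h' | h' | h' | h'
    · rw [h']; exact hrange _ hEm₀
    · rw [h']; exact hrange _ hBm₀
    · rw [h']
      have hF₁eq : F₁ = W ^ j * G₀ ^ c * (F₀ ^ c)⁻¹ := by
        rw [eq_mul_inv_iff_mul_eq]; exact hI4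
      rw [hF₁eq]
      exact mul_mem (mul_mem (pow_mem hWrange j) (pow_mem (hrange _ hG₀m₀) c))
        (inv_mem (pow_mem (hrange _ hF₀m₀) c))
    · rw [h', hGG]; exact hrange _ hG₀m₀
  have hsurj : Function.Surjective Ψ' := by
    intro y
    obtain ⟨p, hp⟩ := hH₁range y.2
    exact ⟨p, Subtype.ext hp⟩
  -- injectivity
  have hinj : Function.Injective Ψ' := by
    rw [injective_iff_map_eq_one]
    rintro ⟨a, h⟩ h1
    have h1' : Ψ (a, h) = 1 := congrArg Subtype.val h1
    rw [hΨapp] at h1'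
    have hfa : f a = (↑h : SU3)⁻¹ := by
      rw [eq_inv_iff_mul_eq_one]; exact h1'
    have hfaH₀ : f a ∈ H₀ := by rw [hfa]; exact inv_mem h.2
    obtain ⟨σ, hσ⟩ := hQ _ hfaH₀
    have hval : (f a).val = dM (eps (3*n)) ((n:ℤ) * ((Multiplicative.toAdd a).val : ℕ))
        ((n:ℤ) * ((Multiplicative.toAdd a).val : ℕ)) ((n:ℤ) * ((Multiplicative.toAdd a).val : ℕ)) := by
      rw [hfapp, SU3.cpow, vW, dM_pow]
    set v : ℕ := (Multiplicative.toAdd a).val with hv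
    have hσ0 : σ 0 = 0 := by
      by_contra hne
      have h00 := (hσ 0 (σ 0)).1 rfl
      rw [hval] at h00
      have hz : (dM (eps (3*n)) ((n:ℤ)*v) ((n:ℤ)*v) ((n:ℤ)*v)) 0 (σ 0) = 0 := by
        unfold dM
        exact Matrix.diagonal_apply_ne _ fun hc => hne hc.symm
      rw [hz, zero_pow (by omega : 2*n ≠ 0)] at h00
      exact one_ne_zero h00.symm
    have h00 := (hσ 0 0).1 hσ0.symm
    rw [hval] at h00
    have hent : (dM (eps (3*n)) ((n:ℤ)*v) ((n:ℤ)*v) ((n:ℤ)*v)) 0 0 = eps 3 ^ v := by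
      unfold dM
      rw [Matrix.diagonal_apply_eq, Matrix.cons_val_zero, _root_.zpow_mul, ← hω,
        zpow_natCast]
    rw [hent, ← pow_mul] at h00
    have hdvd : 3 ∣ v * (2*n) :=
      ((eps_prim 3 (by norm_num)).pow_eq_one_iff_dvd _).mp h00
    have hp3 : Nat.Prime 3 := by norm_num
    have h3v : 3 ∣ v := by
      rcases hp3.dvd_mul.mp hdvd with hv' | hv'
      · exact hv'
      · rcases hp3.dvd_mul.mp hv' with h' | h'
        · norm_num at h'
        · exact absurd h' h3
    have hv0 : v = 0 := by have := ZMod.val_lt (Multiplicative.toAdd a); omega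
    have ha : a = 1 := by
      have h0 : (Multiplicative.toAdd a) = 0 := (ZMod.val_eq_zero _).mp hv0
      rw [← ofAdd_toAdd a, h0, ofAdd_zero]
    have hh : (↑h : SU3) = 1 := by
      rw [ha, _root_.map_one, _root_.one_mul] at h1'; exact h1'
    exact Prod.ext ha (Subtype.ext hh)
  exact ⟨(MulEquiv.ofBijective Ψ' ⟨hinj, hsurj⟩).symm⟩
end
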